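/- arXiv:math/9908135 — 3 statements merged into one kernel-verified Lean document; each statement's English description precedes it below -/
import Mathlib

section
/- Let M be a paracompact normal topological space, π : Y → M a locally split continuous map, and q ≥ 1 an integer. If f : Y^[q+1] → ℂ is continuous and satisfies δf = 0 as a function on Y^[q+2], then there exists a continuous function g : Y^[q] → ℂ with δg = f on Y^[q+1]. (Exactness of the fundamental complex Ω⁰(M) → Ω⁰(Y) → Ω⁰(Y^[2]) → Ω⁰(Y^[3]) → ⋯ of continuous ℂ-valued functions in all positive degrees.) -/
/-- The `p`-fold fibre product `Y^[p]` of a map `π : Y → M`: the set of `p`-tuples of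
points of `Y` lying in a single fibre of `π` (a subspace of the product `Y × ⋯ × Y`). -/
def fibreProduct {Y M : Type*} (π : Y → M) (p : ℕ) : Set (Fin p → Y) :=
  {v | ∀ i j, π (v i) = π (v j)}

/-- The simplicial coboundary `δ`: for `g` a function on `Y^[q]`,
`δg (y₁, …, y_{q+1}) = ∑ (−1)^i g(y₁, …, ŷ_i, …, y_{q+1})` (the `i`-th entry omitted,
entries indexed from `1` in the sum; here `i : Fin (q+1)` is `0`-indexed, whence the
sign `(−1)^(i+1)`). -/
noncomputable def fibreDelta {Y M : Type*} (π : Y → M) {q : ℕ}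
    (g : fibreProduct π q → ℂ) : fibreProduct π (q + 1) → ℂ :=
  fun v => ∑ i : Fin (q + 1), (-1 : ℂ) ^ ((i : ℕ) + 1) *
    g ⟨fun j => v.1 (i.succAbove j), fun j k => v.2 (i.succAbove j) (i.succAbove k)⟩

/-- Extending a tuple in a single fibre by a point of the same fibre. -/
lemma fibreProduct_cons_mem {Y M : Type*} (π : Y → M) {p : ℕ} (v : fibreProduct π p)
    (a : Y) (ha : ∀ j, π a = π (v.1 j)) : Fin.cons a v.1 ∈ fibreProduct π (p + 1) := by
  intro j k
  induction j using Fin.cases with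
  | zero =>
    induction k using Fin.cases with
    | zero => rfl
    | succ k' => simpa using ha k'
  | succ j' =>
    induction k using Fin.cases with
    | zero => simpa using (ha j').symm
    | succ k' => simpa using v.2 j' k'

/-- Let `M` be a paracompact normal topological space, `π : Y → M` a
locally split continuous map, and `q ≥ 1`.  If `f : Y^[q+1] → ℂ` is continuous with
`δf = 0` on `Y^[q+2]`, then there is a continuous `g : Y^[q] → ℂ` with `δg = f` on
`Y^[q+1]`: the fundamental complex of continuous `ℂ`-valued functions is exact in all
positive degrees. -/
theorem statement3 {Y M : Type*} [TopologicalSpace Y] [TopologicalSpace M]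
    [ParacompactSpace M] [NormalSpace M]
    (π : Y → M) (hπ : Continuous π)
    (hsplit : ∀ x : M, ∃ U : Set M, IsOpen U ∧ x ∈ U ∧
      ∃ s : U → Y, Continuous s ∧ ∀ u : U, π (s u) = u)
    (q : ℕ) (hq : 1 ≤ q)
    (f : fibreProduct π (q + 1) → ℂ) (hf : Continuous f)
    (hδf : ∀ v : fibreProduct π (q + 1 + 1), fibreDelta π f v = 0) :
    ∃ g : fibreProduct π q → ℂ, Continuous g ∧
      ∀ v : fibreProduct π (q + 1), fibreDelta π g v = f v := by
  classical
  choose U hUo hUmem s hscont hπs using hsplit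
  obtain ⟨ρ, hρ⟩ := PartitionOfUnity.exists_isSubordinate (s := (Set.univ : Set M))
    isClosed_univ U hUo (fun x _ => Set.mem_iUnion.2 ⟨x, hUmem x⟩)
  have hq0 : 0 < q := hq
  set z : Fin q := ⟨0, hq0⟩ with hz
  have hbase : Continuous fun v : fibreProduct π q => π (v.1 z) :=
    hπ.comp ((continuous_apply z).comp continuous_subtype_val)
  -- the building blocks of the primitive
  set T : M → fibreProduct π q → ℂ := fun i v =>
    if h : π (v.1 z) ∈ U i then
      (ρ i (π (v.1 z)) : ℂ) * f ⟨Fin.cons (s i ⟨π (v.1 z), h⟩) v.1,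
        fibreProduct_cons_mem π v _ (fun j => by
          rw [hπs i ⟨_, h⟩]; exact v.2 z j)⟩
    else 0 with hT
  have hTsupp : ∀ i, Function.support (T i) ⊆
      {v : fibreProduct π q | π (v.1 z) ∈ tsupport (ρ i)} := by
    intro i v hv
    by_cases h : π (v.1 z) ∈ U i
    · have hρne : ρ i (π (v.1 z)) ≠ 0 := by
        intro h0
        apply hv
        simp [hT, dif_pos h, h0]
      exact subset_closure (by simpa using hρne)
    · exact absurd (by simp [hT, dif_neg h]) hv
  have hTlf : LocallyFinite fun i => Function.support (T i) :=
    (ρ.locallyFinite_tsupport.preimage_continuous hbase).subset hTsupp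
  have hTcont : ∀ i, Continuous (T i) := by
    intro i
    rw [continuous_iff_continuousAt]
    intro v
    by_cases h : π (v.1 z) ∈ U i
    · have hA : IsOpen {w : fibreProduct π q | π (w.1 z) ∈ U i} := (hUo i).preimage hbase
      have hco : ContinuousOn (T i) {w : fibreProduct π q | π (w.1 z) ∈ U i} := by
        rw [continuousOn_iff_continuous_restrict]
        have hrestr : Set.restrict {w : fibreProduct π q | π (w.1 z) ∈ U i} (T i) =
            fun w : {w : fibreProduct π q | π (w.1 z) ∈ U i} =>
              (ρ i (π (w.1.1 z)) : ℂ) * f ⟨Fin.cons (s i ⟨π (w.1.1 z), w.2⟩) w.1.1,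
                fibreProduct_cons_mem π w.1 _ (fun j => by
                  rw [hπs i ⟨_, w.2⟩]; exact w.1.2 z j)⟩ := by
          funext w
          simp only [Set.restrict_apply, hT]
          exact dif_pos w.2
        change Continuous (Set.restrict {w : fibreProduct π q | π (w.1 z) ∈ U i} (T i))
        rw [hrestr]
        have hval : Continuous fun w : {w : fibreProduct π q | π (w.1 z) ∈ U i} =>
            π (w.1.1 z) := hbase.comp continuous_subtype_val
        refine Continuous.mul ?_ ?_
        · exact Complex.continuous_ofReal.comp ((ρ i).continuous.comp hval)
        · refine hf.comp ?_
          refine Continuous.subtype_mk ?_ _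
          refine continuous_pi fun j => ?_
          refine Fin.cases ?_ (fun k => ?_) j
          · simp only [Fin.cons_zero]
            exact (hscont i).comp (hval.subtype_mk _)
          · simp only [Fin.cons_succ]
            exact (continuous_apply k).comp (continuous_subtype_val.comp
              continuous_subtype_val)
      exact hco.continuousAt (hA.mem_nhds h)
    · have hB : IsOpen {w : fibreProduct π q | π (w.1 z) ∉ tsupport (ρ i)} :=
        (isClosed_closure.isOpen_compl).preimage hbase
      have hvB : v ∈ {w : fibreProduct π q | π (w.1 z) ∉ tsupport (ρ i)} := by
        intro hmem
        exact h (hρ i hmem)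
      have hzero : T i =ᶠ[nhds v] fun _ => (0 : ℂ) := by
        filter_upwards [hB.mem_nhds hvB] with w hw
        by_cases h' : π (w.1 z) ∈ U i
        · have : ρ i (π (w.1 z)) = 0 := by
            by_contra h0
            exact hw (subset_closure (by simpa using h0))
          simp [hT, dif_pos h', this]
        · simp [hT, dif_neg h']
      exact (continuousAt_const (y := (0 : ℂ))).congr hzero.symm
  refine ⟨fun v => -∑ᶠ i, T i v, (continuous_finsum hTcont hTlf).neg, ?_⟩
  intro v
  -- the base point of the fibre
  set m : M := π (v.1 0) with hm
  have hvm : ∀ j, π (v.1 j) = m := fun j => v.2 j 0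
  set F : Finset M := ρ.finsupport m with hF
  -- abbreviation for the faces of v
  set vk : Fin (q + 1) → fibreProduct π q := fun k =>
    ⟨fun j => v.1 (k.succAbove j), fun j l => v.2 (k.succAbove j) (k.succAbove l)⟩ with hvk
  have hbk : ∀ k, π ((vk k).1 z) = m := fun k => hvm _
  -- the finsum collapses to a sum over F
  have hcollapse : ∀ k, ∑ᶠ i, T i (vk k) = ∑ i ∈ F, T i (vk k) := by
    intro k
    refine finsum_eq_sum_of_support_subset _ ?_
    intro i hi
    by_cases h : π ((vk k).1 z) ∈ U i
    · have hρne : ρ i (π ((vk k).1 z)) ≠ 0 := by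
        intro h0
        apply hi
        simp [hT, dif_pos h, h0]
      rw [hbk k] at hρne
      simpa [hF] using hρne
    · exact absurd (by simp [hT, dif_neg h]) hi
  -- key computation for each i in the support
  have key : ∀ i ∈ F, ∑ k : Fin (q + 1), (-1 : ℂ) ^ (k : ℕ) * T i (vk k) =
      (ρ i m : ℂ) * f v := by
    intro i hiF
    have him : m ∈ U i := hρ i (subset_closure (by simpa [hF] using hiF))
    -- the extended tuple
    set W : fibreProduct π (q + 1 + 1) :=
      ⟨Fin.cons (s i ⟨m, him⟩) v.1, fibreProduct_cons_mem π v _ (fun j => by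
        rw [hπs i ⟨m, him⟩]; exact (hvm j).symm)⟩ with hW
    -- the faces of W
    have hW0 : (⟨fun l => W.1 ((0 : Fin (q + 1 + 1)).succAbove l),
        fun l l' => W.2 _ _⟩ : fibreProduct π (q + 1)) = v := by
      refine Subtype.ext (funext fun l => ?_)
      simp [hW, Fin.succAbove_zero]
    have hWk : ∀ k : Fin (q + 1), T i (vk k) = (ρ i m : ℂ) *
        f ⟨fun l => W.1 ((Fin.succ k).succAbove l),
          fun l l' => W.2 _ _⟩ := by
      intro k
      have h' : π ((vk k).1 z) ∈ U i := by rw [hbk k]; exact him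
      have e1 : (⟨π ((vk k).1 z), h'⟩ : U i) = ⟨m, him⟩ := Subtype.ext (hbk k)
      simp only [hT]
      rw [dif_pos h']
      congr 1
      · rw [hbk k]
      · congr 1
        refine Subtype.ext (funext fun l => ?_)
        induction l using Fin.cases with
        | zero =>
          simp only [Fin.cons_zero, Fin.succ_succAbove_zero]
          rw [e1]
          rfl
        | succ l' =>
          simp [hW, hvk, Fin.succ_succAbove_succ]
    have hδ := hδf W
    rw [fibreDelta, Fin.sum_univ_succ] at hδ
    simp only [Fin.val_zero, pow_one, Fin.val_succ] at hδ
    rw [hW0] at hδ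
    have hsum : ∑ k : Fin (q + 1), (-1 : ℂ) ^ ((k : ℕ) + 1 + 1) *
        f ⟨fun l => W.1 ((Fin.succ k).succAbove l), fun l l' => W.2 _ _⟩ = f v := by
      have := hδ
      linear_combination this
    calc ∑ k : Fin (q + 1), (-1 : ℂ) ^ (k : ℕ) * T i (vk k)
        = ∑ k : Fin (q + 1), (ρ i m : ℂ) * ((-1 : ℂ) ^ ((k : ℕ) + 1 + 1) *
            f ⟨fun l => W.1 ((Fin.succ k).succAbove l), fun l l' => W.2 _ _⟩) := by
          refine Finset.sum_congr rfl fun k _ => ?_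
          rw [hWk k, pow_add, pow_add]
          ring
      _ = (ρ i m : ℂ) * f v := by rw [← Finset.mul_sum, hsum]
  -- put everything together
  rw [fibreDelta]
  have : ∑ k : Fin (q + 1), (-1 : ℂ) ^ ((k : ℕ) + 1) *
      (-∑ᶠ i, T i (vk k)) = ∑ k : Fin (q + 1), ∑ i ∈ F, (-1 : ℂ) ^ (k : ℕ) * T i (vk k) := by
    refine Finset.sum_congr rfl fun k _ => ?_
    rw [hcollapse k, ← Finset.sum_neg_distrib, Finset.mul_sum]
    refine Finset.sum_congr rfl fun i _ => ?_
    rw [pow_succ]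
    ring
  calc ∑ k : Fin (q + 1), (-1 : ℂ) ^ ((k : ℕ) + 1) *
        (fun v' => -∑ᶠ i, T i v') (vk k)
      = ∑ k : Fin (q + 1), ∑ i ∈ F, (-1 : ℂ) ^ (k : ℕ) * T i (vk k) := this
    _ = ∑ i ∈ F, ∑ k : Fin (q + 1), (-1 : ℂ) ^ (k : ℕ) * T i (vk k) := Finset.sum_comm
    _ = ∑ i ∈ F, (ρ i m : ℂ) * f v := Finset.sum_congr rfl key
    _ = (∑ i ∈ F, (ρ i m : ℝ) : ℝ) * f v := by
        rw [← Finset.sum_mul]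
        norm_cast
    _ = f v := by
        rw [ρ.sum_finsupport (Set.mem_univ m)]
        simp
end

section
/- Let M be a Hausdorff, σ-compact, finite-dimensional smooth manifold, Y a smooth manifold, and π : Y → M a smooth map that is smoothly locally split. Let f : Y × Y → ℂ be a smooth function which satisfies the additive cocycle identity f(y₁, y₂) + f(y₂, y₃) = f(y₁, y₃) whenever π(y₁) = π(y₂) = π(y₃). Then there exists a smooth function h : Y → ℂ such that f(y₁, y₂) = h(y₂) − h(y₁) whenever π(y₁) = π(y₂). (Exactness at the stage Y^[2] of the fundamental complex of 0-forms in the smooth category, proved using smooth partitions of unity on M.) -/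
open Manifold

/-- Let `M` be a Hausdorff, σ-compact, finite-dimensional smooth
manifold, `Y` a smooth manifold, and `π : Y → M` a smooth map that is smoothly locally
split.  Let `f : Y × Y → ℂ` be a smooth function satisfying the additive cocycle
identity `f(y₁,y₂) + f(y₂,y₃) = f(y₁,y₃)` whenever `π y₁ = π y₂ = π y₃`.  Then there is
a smooth `h : Y → ℂ` with `f(y₁,y₂) = h y₂ - h y₁` whenever `π y₁ = π y₂`. -/
theorem statement4
    {EM : Type*} [NormedAddCommGroup EM] [NormedSpace ℝ EM] [FiniteDimensional ℝ EM]
    {HM : Type*} [TopologicalSpace HM] {IM : ModelWithCorners ℝ EM HM}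
    {M : Type*} [TopologicalSpace M] [ChartedSpace HM M] [IsManifold IM (⊤ : ℕ∞) M]
    [T2Space M] [SigmaCompactSpace M]
    {EY : Type*} [NormedAddCommGroup EY] [NormedSpace ℝ EY]
    {HY : Type*} [TopologicalSpace HY] {IY : ModelWithCorners ℝ EY HY}
    {Y : Type*} [TopologicalSpace Y] [ChartedSpace HY Y] [IsManifold IY (⊤ : ℕ∞) Y]
    (π : Y → M) (hπ : ContMDiff IY IM (⊤ : ℕ∞) π)
    (hsplit : ∀ x : M, ∃ U : Set M, IsOpen U ∧ x ∈ U ∧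
      ∃ s : M → Y, ContMDiffOn IM IY (⊤ : ℕ∞) s U ∧ ∀ u ∈ U, π (s u) = u)
    (f : Y × Y → ℂ) (hf : ContMDiff (IY.prod IY) 𝓘(ℝ, ℂ) (⊤ : ℕ∞) f)
    (hcoc : ∀ y₁ y₂ y₃ : Y, π y₁ = π y₂ → π y₂ = π y₃ →
      f (y₁, y₂) + f (y₂, y₃) = f (y₁, y₃)) :
    ∃ h : Y → ℂ, ContMDiff IY 𝓘(ℝ, ℂ) (⊤ : ℕ∞) h ∧
      ∀ y₁ y₂ : Y, π y₁ = π y₂ → f (y₁, y₂) = h y₂ - h y₁ := by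

  classical
  -- choose the data of the local sections
  choose U hUopen hUmem sec hsec hsecπ using hsplit
  -- a smooth partition of unity on `M` subordinate to the cover `U`
  obtain ⟨ρ, hρ⟩ := SmoothPartitionOfUnity.exists_isSubordinate (I := IM)
    (s := Set.univ) isClosed_univ U hUopen
    (fun x _ => Set.mem_iUnion.2 ⟨x, hUmem x⟩)
  -- pull it back to `Y` along `π`
  have hρπ : ∀ i : M, ContMDiff IY 𝓘(ℝ) (⊤ : ℕ∞) (fun y => ρ i (π y)) :=
    fun i => (ρ i).contMDiff.comp hπ
  set ρ' : SmoothPartitionOfUnity M IY Y Set.univ :=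
    { toFun := fun i => ⟨fun y => ρ i (π y), hρπ i⟩
      locallyFinite' := by
        have := (ρ.locallyFinite.preimage_continuous hπ.continuous)
        refine this.subset fun i => ?_
        intro y hy
        exact hy
      nonneg' := fun i y => ρ.nonneg i (π y)
      sum_eq_one' := fun y _ => ρ.sum_eq_one (Set.mem_univ (π y))
      sum_le_one' := fun y => ρ.sum_le_one (π y) } with hρ'def
  -- the family of "local primitives"
  set g : M → Y → ℂ := fun i y => f (sec i (π y), y) with hg_def
  -- each `g i` is smooth near the support of `ρ' i`
  have hsupp : ∀ i : M, tsupport (ρ' i) ⊆ π ⁻¹' (U i) := by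
    intro i
    have h1 : tsupport (ρ' i) ⊆ π ⁻¹' (tsupport (ρ i)) := by
      have : Function.support (ρ' i) ⊆ π ⁻¹' (tsupport (ρ i)) := by
        intro y hy
        exact subset_closure hy
      refine closure_minimal this ?_
      exact (isClosed_closure).preimage hπ.continuous
    exact h1.trans (Set.preimage_mono (hρ i))
  have hgsmooth : ∀ i : M, ∀ y ∈ tsupport (ρ' i),
      ContMDiffAt IY 𝓘(ℝ, ℂ) (⊤ : ℕ∞) (g i) y := by
    intro i y hy
    have hyU : π y ∈ U i := hsupp i hy
    have hsec_at : ContMDiffAt IM IY (⊤ : ℕ∞) (sec i) (π y) :=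
      (hsec i).contMDiffAt ((hUopen i).mem_nhds hyU)
    exact hf.contMDiffAt.comp y
      (((hsec_at.comp y (hπ.contMDiffAt)).prodMk contMDiffAt_id))
  -- define `h`
  refine ⟨fun y => ∑ᶠ i, ρ' i y • g i y, ρ'.contMDiff_finsum_smul hgsmooth, ?_⟩
  intro y₁ y₂ hπeq
  -- pointwise computation
  have hfin : ∀ y : Y, (Function.support fun i => ρ' i y • g i y).Finite := by
    intro y
    refine ((ρ.locallyFinite.point_finite (π y))).subset fun i hi => ?_
    simp only [Function.mem_support] at hi ⊢
    intro h0
    exact hi (by show ρ i (π y) • g i y = 0; rw [h0, zero_smul])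
  have key : (fun i => ρ' i y₂ • g i y₂ - ρ' i y₁ • g i y₁)
      = fun i => ρ i (π y₁) • f (y₁, y₂) := by
    funext i
    show ρ i (π y₂) • g i y₂ - ρ i (π y₁) • g i y₁ = ρ i (π y₁) • f (y₁, y₂)
    rw [← hπeq]
    rcases eq_or_ne (ρ i (π y₁)) 0 with h0 | h0
    · simp [h0]
    · have hiU : π y₁ ∈ U i := (hρ i) (subset_closure (by simpa using h0))
      have hπs : π (sec i (π y₁)) = π y₁ := hsecπ i _ hiU
      have hc : f (sec i (π y₁), y₁) + f (y₁, y₂) = f (sec i (π y₁), y₂) :=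
        hcoc _ _ _ hπs hπeq
      have : g i y₂ - g i y₁ = f (y₁, y₂) := by
        show f (sec i (π y₂), y₂) - f (sec i (π y₁), y₁) = f (y₁, y₂)
        rw [← hπeq, ← hc]; ring
      rw [← smul_sub, this]
  calc f (y₁, y₂) = (∑ᶠ i, ρ i (π y₁)) • f (y₁, y₂) := by
        rw [ρ.sum_eq_one (Set.mem_univ (π y₁)), one_smul]
    _ = ∑ᶠ i, ρ i (π y₁) • f (y₁, y₂) := finsum_smul _ _
    _ = ∑ᶠ i, (ρ' i y₂ • g i y₂ - ρ' i y₁ • g i y₁) := by rw [key]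
    _ = (∑ᶠ i, ρ' i y₂ • g i y₂) - ∑ᶠ i, ρ' i y₁ • g i y₁ :=
        finsum_sub_distrib (hfin y₂) (hfin y₁)
end

section
/- Let M be a Hausdorff, σ-compact, finite-dimensional smooth manifold, Y a smooth manifold, π : Y → M a smooth map that is smoothly locally split, and q ≥ 1 an integer. Let f : Y^{q+1} → ℂ be a smooth function on the (q+1)-fold cartesian product whose restriction to the fibre product Y^[q+1] satisfies δf = 0 on Y^[q+2]. Then there exists a smooth function g : Y^{q} → ℂ on the q-fold cartesian product such that δg = f holds on Y^[q+1]. (Exactness in all positive degrees of the fundamental complex of smooth ℂ-valued functions on the fibre powers of Y.) -/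
open Manifold
open Topology

instance smoothRingComplex : ContMDiffRing 𝓘(ℝ, ℂ) ((⊤ : ℕ∞) : WithTop ℕ∞) ℂ := by
  constructor
  rw [← modelWithCornersSelf_prod, chartedSpaceSelf_prod]
  exact contDiff_mul.contMDiff

section PiLemmas
variable {𝕜 : Type*} [NontriviallyNormedField 𝕜]
  {ι : Type*} [Fintype ι]
  {E : Type*} [NormedAddCommGroup E] [NormedSpace 𝕜 E]
  {H : Type*} [TopologicalSpace H] {I : ModelWithCorners 𝕜 E H}
  {Y : Type*} [TopologicalSpace Y] [ChartedSpace H Y]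
  {EN : Type*} [NormedAddCommGroup EN] [NormedSpace 𝕜 EN]
  {HN : Type*} [TopologicalSpace HN] {J : ModelWithCorners 𝕜 EN HN}
  {N : Type*} [TopologicalSpace N] [ChartedSpace HN N]
  {n : ℕ∞}

theorem contMDiff_pi_eval' (i : ι) :
    ContMDiff (ModelWithCorners.pi fun _ : ι => I) I n (fun v : ι → Y => v i) := by
  intro x
  rw [contMDiffAt_iff]
  refine ⟨(continuous_apply i).continuousAt, ?_⟩
  have hproj : ContDiffWithinAt 𝕜 n (fun w : ι → E => w i)
      (Set.range (ModelWithCorners.pi fun _ : ι => I))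
      (extChartAt (ModelWithCorners.pi fun _ : ι => I) x x) :=
    (ContinuousLinearMap.proj i : (ι → E) →L[𝕜] E).contDiff.contDiffWithinAt
  refine hproj.congr_of_eventuallyEq_of_mem ?_ ?_
  · have hopen : IsOpen {w : ι → E | I.symm (w i) ∈ (chartAt H (x i)).target} :=
      (I.continuous_symm.comp (continuous_apply i)).isOpen_preimage _
        (chartAt H (x i)).open_target
    have hmem : extChartAt (ModelWithCorners.pi fun _ : ι => I) x x ∈
        {w : ι → E | I.symm (w i) ∈ (chartAt H (x i)).target} := by
      have hx : (extChartAt (ModelWithCorners.pi fun _ : ι => I) x x) i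
          = I ((chartAt H (x i)) (x i)) := rfl
      simp only [Set.mem_setOf_eq, hx, I.left_inv]
      exact (chartAt H (x i)).map_source (mem_chart_source _ _)
    filter_upwards [nhdsWithin_le_nhds (hopen.mem_nhds hmem),
      self_mem_nhdsWithin] with w hw hw'
    show extChartAt I (x i) ((extChartAt (ModelWithCorners.pi fun _ : ι => I) x).symm w i) = w i
    have hrange : w i ∈ Set.range I := by
      obtain ⟨v, rfl⟩ := hw'
      exact ⟨v i, rfl⟩
    show I ((chartAt H (x i)) ((chartAt H (x i)).symm (I.symm (w i)))) = w i
    rw [(chartAt H (x i)).right_inv hw, I.right_inv hrange]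
  · exact ⟨(chartAt (ModelPi fun _ : ι => H) x) x, rfl⟩

theorem ContMDiffAt.pi_mk' {φ : N → ι → Y} {x : N}
    (h : ∀ i, ContMDiffAt J I n (fun y => φ y i) x) :
    ContMDiffAt J (ModelWithCorners.pi fun _ : ι => I) n φ x := by
  rw [contMDiffAt_iff]
  refine ⟨continuousAt_pi.2 fun i => ((h i).continuousAt), ?_⟩
  rw [contDiffWithinAt_pi]
  exact fun i => (contMDiffAt_iff.1 (h i)).2

end PiLemmas


/-- Let `M` be a Hausdorff, σ-compact, finite-dimensional smooth
manifold, `Y` a smooth manifold, `π : Y → M` a smooth map that is smoothly locally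
split, and `q ≥ 1`.  Let `f` be a smooth `ℂ`-valued function on the `(q+1)`-fold
cartesian product `Y^{q+1}` (with its product smooth structure) whose restriction to the
fibre product `Y^[q+1] = {v : ∀ i j, π (v i) = π (v j)}` satisfies `δf = 0` on
`Y^[q+2]`, where `δg (y₁, …, y_{p+1}) = ∑ᵢ (−1)^i g(y₁, …, ŷ_i, …, y_{p+1})` (entries
indexed from `1`; below `i : Fin (p+1)` is `0`-indexed, whence the sign `(−1)^(i+1)`).
Then there is a smooth function `g` on the `q`-fold cartesian product `Y^q` with
`δg = f` on `Y^[q+1]`. -/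
theorem statement5
    {EM : Type*} [NormedAddCommGroup EM] [NormedSpace ℝ EM] [FiniteDimensional ℝ EM]
    {HM : Type*} [TopologicalSpace HM] {IM : ModelWithCorners ℝ EM HM}
    {M : Type*} [TopologicalSpace M] [ChartedSpace HM M] [IsManifold IM ((⊤ : ℕ∞) : WithTop ℕ∞) M]
    [T2Space M] [SigmaCompactSpace M]
    {EY : Type*} [NormedAddCommGroup EY] [NormedSpace ℝ EY]
    {HY : Type*} [TopologicalSpace HY] {IY : ModelWithCorners ℝ EY HY}
    {Y : Type*} [TopologicalSpace Y] [ChartedSpace HY Y] [IsManifold IY ((⊤ : ℕ∞) : WithTop ℕ∞) Y]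
    (π : Y → M) (hπ : ContMDiff IY IM (⊤ : ℕ∞) π)
    (hsplit : ∀ x : M, ∃ U : Set M, IsOpen U ∧ x ∈ U ∧
      ∃ s : M → Y, ContMDiffOn IM IY (⊤ : ℕ∞) s U ∧ ∀ u ∈ U, π (s u) = u)
    (q : ℕ) (hq : 1 ≤ q)
    (f : (Fin (q + 1) → Y) → ℂ)
    (hf : ContMDiff (ModelWithCorners.pi fun _ : Fin (q + 1) => IY) 𝓘(ℝ, ℂ) (⊤ : ℕ∞) f)
    (hδf : ∀ v : Fin (q + 2) → Y, (∀ i j, π (v i) = π (v j)) →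
      ∑ i : Fin (q + 2), (-1 : ℂ) ^ ((i : ℕ) + 1) * f (fun j => v (i.succAbove j)) = 0) :
    ∃ g : (Fin q → Y) → ℂ,
      ContMDiff (ModelWithCorners.pi fun _ : Fin q => IY) 𝓘(ℝ, ℂ) (⊤ : ℕ∞) g ∧
      ∀ v : Fin (q + 1) → Y, (∀ i j, π (v i) = π (v j)) →
        ∑ i : Fin (q + 1), (-1 : ℂ) ^ ((i : ℕ) + 1) * g (fun j => v (i.succAbove j))
          = f v := by
  classical
  choose U hUo hmemU sec hsec hπsec using hsplit
  obtain ⟨ρ, hρ⟩ := SmoothPartitionOfUnity.exists_isSubordinate (I := IM) isClosed_univ U hUo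
    (fun x _ => Set.mem_iUnion.2 ⟨x, hmemU x⟩)
  have hq0 : 0 < q := hq
  set i0 : Fin q := ⟨0, hq0⟩ with hi0
  -- the base point map
  set e : (Fin q → Y) → M := fun v => π (v i0) with he_def
  have he : ContMDiff (ModelWithCorners.pi fun _ : Fin q => IY) IM ((⊤ : ℕ∞) : WithTop ℕ∞) e :=
    hπ.comp (contMDiff_pi_eval' i0)
  -- the individual terms
  set T : M → (Fin q → Y) → ℂ := fun α v =>
    ((ρ α (e v) : ℝ) : ℂ) * f (Fin.cons (sec α (e v)) v) with hT_def
  have hTzero : ∀ α v, ρ α (e v) = 0 → T α v = 0 := by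
    intro α v h
    simp [hT_def, h]
  have hTsmooth : ∀ α, ContMDiff (ModelWithCorners.pi fun _ : Fin q => IY) 𝓘(ℝ, ℂ) ((⊤ : ℕ∞) : WithTop ℕ∞) (T α) := by
    intro α v₀
    by_cases hv₀ : e v₀ ∈ U α
    · have h1 : ContMDiffAt (ModelWithCorners.pi fun _ : Fin q => IY) 𝓘(ℝ, ℂ) ((⊤ : ℕ∞) : WithTop ℕ∞)
          (fun v => ((ρ α (e v) : ℝ) : ℂ)) v₀ :=
        ((Complex.ofRealCLM.contDiff.contMDiff.comp ((ρ α).contMDiff.comp he))).contMDiffAt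
      have hΦ : ContMDiffAt (ModelWithCorners.pi fun _ : Fin q => IY)
          (ModelWithCorners.pi fun _ : Fin (q + 1) => IY) ((⊤ : ℕ∞) : WithTop ℕ∞)
          (fun v => (Fin.cons (sec α (e v)) v : Fin (q+1) → Y)) v₀ := by
        apply ContMDiffAt.pi_mk'
        intro j
        refine Fin.cases ?_ (fun k => ?_) j
        · simp only [Fin.cons_zero]
          exact ((hsec α).contMDiffAt ((hUo α).mem_nhds hv₀)).comp v₀ he.contMDiffAt
        · simp only [Fin.cons_succ]
          exact (contMDiff_pi_eval' k).contMDiffAt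
      have h2 : ContMDiffAt (ModelWithCorners.pi fun _ : Fin q => IY) 𝓘(ℝ, ℂ) ((⊤ : ℕ∞) : WithTop ℕ∞)
          (fun v => f (Fin.cons (sec α (e v)) v)) v₀ :=
        ContMDiffAt.comp (I' := ModelWithCorners.pi fun _ : Fin (q+1) => IY) v₀ hf.contMDiffAt hΦ
      exact h1.mul h2
    · have hnot : e v₀ ∉ tsupport (ρ α) := fun h => hv₀ (hρ α h)
      have hz : ∀ᶠ v in 𝓝 v₀, T α v = 0 := by
        have : ∀ᶠ v in 𝓝 v₀, e v ∉ tsupport (ρ α) :=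
          he.continuous.continuousAt.eventually_mem
            ((isClosed_tsupport (ρ α)).isOpen_compl.mem_nhds hnot)
        filter_upwards [this] with v hv
        exact hTzero α v (image_eq_zero_of_notMem_tsupport hv)
      exact (contMDiffAt_const (c := (0 : ℂ))).congr_of_eventuallyEq hz
  have hTsupp : ∀ α, Function.support (T α) ⊆ e ⁻¹' Function.support (ρ α) := by
    intro α v hv
    simp only [Set.mem_preimage, Function.mem_support]
    intro h
    exact hv (hTzero α v h)
  have hlf : LocallyFinite fun α => Function.support (T α) :=
    (ρ.locallyFinite.preimage_continuous he.continuous).subset hTsupp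
  refine ⟨fun v => -∑ᶠ α, T α v, (contMDiff_finsum hTsmooth hlf).neg, ?_⟩
  -- the algebraic identity
  intro w hw
  set x0 : M := π (w 0) with hx0_def
  have hx0 : ∀ k, π (w k) = x0 := fun k => hw k 0
  have hbase : ∀ i : Fin (q + 1), e (fun j => w (i.succAbove j)) = x0 := fun i => hx0 _
  set c : M → ℂ := fun α => ((ρ α x0 : ℝ) : ℂ) with hc_def
  have hsupρ : (Function.support fun α => ρ α x0).Finite := by
    refine Set.Finite.subset (ρ.locallyFinite.point_finite x0) ?_
    intro α hα
    exact hα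
  have hsupc : (Function.support c).Finite := by
    refine hsupρ.subset ?_
    intro α hα h0
    exact hα (by simp [hc_def, h0])
  -- rewrite each g-value
  have hgval : ∀ i : Fin (q + 1),
      (fun v => -∑ᶠ α, T α v) (fun j => w (i.succAbove j))
        = -∑ᶠ α, c α * f (Fin.cons (sec α x0) (fun j => w (i.succAbove j))) := by
    intro i
    simp only [hT_def, hbase i, hc_def]
  have hsupTi : ∀ i : Fin (q + 1),
      (Function.support fun α =>
        c α * f (Fin.cons (sec α x0) (fun j => w (i.succAbove j)))).Finite := by
    intro i
    refine hsupc.subset ?_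
    intro α hα h0
    exact hα (by simp [h0])
  -- the cocycle computation for each α in the support
  have hkey : ∀ α, ∑ i : Fin (q + 1), (-1 : ℂ) ^ ((i : ℕ) + 1) *
      -(c α * f (Fin.cons (sec α x0) (fun j => w (i.succAbove j)))) = c α * f w := by
    intro α
    by_cases h0 : ρ α x0 = 0
    · simp [hc_def, h0]
    · have hUα : x0 ∈ U α := hρ α (subset_closure (by exact h0))
      set y : Y := sec α x0 with hy_def
      have hy : π y = x0 := hπsec α x0 hUα
      have hv : ∀ i j : Fin (q+2), π ((Fin.cons y w : Fin (q+2) → Y) i) = π ((Fin.cons y w : Fin (q+2) → Y) j) := by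
        intro i j
        have hall : ∀ k, π ((Fin.cons y w : Fin (q+2) → Y) k) = x0 := by
          intro k
          refine Fin.cases ?_ (fun m => ?_) k
          · simpa using hy
          · simpa using hx0 m
        rw [hall i, hall j]
      have hc := hδf (Fin.cons y w) hv
      rw [Fin.sum_univ_succ] at hc
      have h0' : (fun j => (Fin.cons y w : Fin (q + 2) → Y) ((0 : Fin (q + 2)).succAbove j)) = w := by
        funext j
        rw [Fin.zero_succAbove, Fin.cons_succ]
      have hs : ∀ i : Fin (q + 1), (fun k => (Fin.cons y w : Fin (q + 2) → Y) ((i.succ).succAbove k))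
          = (Fin.cons y (fun k => w (i.succAbove k)) : Fin (q + 1) → Y) := by
        intro i
        funext k
        refine Fin.cases ?_ (fun m => ?_) k
        · rw [Fin.succ_succAbove_zero, Fin.cons_zero, Fin.cons_zero]
        · rw [Fin.succ_succAbove_succ, Fin.cons_succ, Fin.cons_succ]
      simp only [h0', hs, Fin.val_succ, Fin.val_zero] at hc
      -- hc : (-1)^(0+1) * f w + ∑ i, (-1)^((i+1)+1) * f (cons y (w∘succAbove i)) = 0
      have hsum : ∑ i : Fin (q + 1), (-1 : ℂ) ^ (((i : ℕ) + 1) + 1) *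
          f (Fin.cons y fun k => w (i.succAbove k)) = f w := by
        linear_combination hc
      calc ∑ i : Fin (q + 1), (-1 : ℂ) ^ ((i : ℕ) + 1) *
            -(c α * f (Fin.cons y (fun j => w (i.succAbove j))))
          = c α * ∑ i : Fin (q + 1), (-1 : ℂ) ^ (((i : ℕ) + 1) + 1) *
            f (Fin.cons y fun k => w (i.succAbove k)) := by
            rw [Finset.mul_sum]
            refine Finset.sum_congr rfl fun i _ => ?_
            ring
        _ = c α * f w := by rw [hsum]
  calc ∑ i : Fin (q + 1), (-1 : ℂ) ^ ((i : ℕ) + 1) *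
        (fun v => -∑ᶠ α, T α v) (fun j => w (i.succAbove j))
      = ∑ i : Fin (q + 1), ∑ᶠ α, (-1 : ℂ) ^ ((i : ℕ) + 1) *
          -(c α * f (Fin.cons (sec α x0) (fun j => w (i.succAbove j)))) := by
        refine Finset.sum_congr rfl fun i _ => ?_
        rw [hgval i, ← finsum_neg_distrib, mul_finsum' _ _ ((hsupTi i).subset ?_)]
        intro α hα h0
        exact hα (by simp [h0])
    _ = ∑ᶠ α, ∑ i : Fin (q + 1), (-1 : ℂ) ^ ((i : ℕ) + 1) *
          -(c α * f (Fin.cons (sec α x0) (fun j => w (i.succAbove j)))) := by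
        refine (finsum_sum_comm Finset.univ
          (fun α (i : Fin (q + 1)) => (-1 : ℂ) ^ ((i : ℕ) + 1) *
            -(c α * f (Fin.cons (sec α x0) (fun j => w (i.succAbove j))))) ?_).symm
        intro i _
        refine hsupc.subset ?_
        intro α hα h0
        exact hα (by simp [h0])
    _ = ∑ᶠ α, c α * f w := finsum_congr hkey
    _ = (∑ᶠ α, c α) * f w := (finsum_mul' _ _ hsupc).symm
    _ = f w := by
        have h1 : (∑ᶠ α, c α) = ((∑ᶠ α, ρ α x0 : ℝ) : ℂ) :=
          (AddMonoidHom.map_finsum Complex.ofRealHom.toAddMonoidHom hsupρ).symm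
        rw [h1, ρ.sum_eq_one (Set.mem_univ x0), Complex.ofReal_one, one_mul]
end
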